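/- For all distinct indices i ≠ j in {1,...,N} and every nonnegative integer k, the covariance of X_i^k and X_j^k under the joint spectral measure equals minus the squared (i,j) entry of A^k: ∑_{σ∈S_N} ε(σ) λ_{σ(i)}^{k} λ_{σ(j)}^{k} ∏_{l=1}^N p_{lσ(l)} − (A^k)_{ii}(A^k)_{jj} = −((A^k)_{ij})². -/

import Mathlib

open Matrix BigOperators

private lemma perm_eq_one_or_swap {N : ℕ} {i j : Fin N} (hij : i ≠ j)
    (σ : Equiv.Perm (Fin N)) (h : ∀ l, l ≠ i → l ≠ j → σ l = l) :
    σ = 1 ∨ σ = Equiv.swap i j := by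
  have hi : σ i = i ∨ σ i = j := by
    by_contra hc
    push_neg at hc
    exact hc.1 (σ.injective (h (σ i) hc.1 hc.2))
  have hj : σ j = i ∨ σ j = j := by
    by_contra hc
    push_neg at hc
    exact hc.2 (σ.injective (h (σ j) hc.1 hc.2))
  rcases hi with hi | hi
  · rcases hj with hj | hj
    · exact absurd (σ.injective (hj.trans hi.symm)) (Ne.symm hij)
    · left
      ext l
      by_cases hli : l = i
      · simp [hli, hi]
      · by_cases hlj : l = j
        · simp [hlj, hj]
        · simp [h l hli hlj]
  · have hj' : σ j = i := by
      rcases hj with hj | hj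
      · exact hj
      · exact absurd (σ.injective (hi.trans hj.symm)) hij
    right
    ext l
    by_cases hli : l = i
    · simp [hli, hi, Equiv.swap_apply_left]
    · by_cases hlj : l = j
      · simp [hlj, hj', Equiv.swap_apply_right]
      · simp [h l hli hlj, Equiv.swap_apply_of_ne_of_ne hli hlj]

/-- Under the joint spectral measure, `cov(X_i^k, X_j^k) = -((A^k)_{ij})²` for `i ≠ j`. -/
theorem cov_powers_eq_neg_sq_entry (N : ℕ)
    (A P : Matrix (Fin N) (Fin N) ℝ) (lam : Fin N → ℝ)
    (hsymm : A.IsSymm)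
    (hdecomp : A = P * Matrix.diagonal lam * Pᵀ)
    (horth : P * Pᵀ = 1)
    (hdet : P.det = 1)
    (i j : Fin N) (hij : i ≠ j) (k : ℕ) :
    (∑ σ : Equiv.Perm (Fin N),
        ((Equiv.Perm.sign σ : ℤ) : ℝ) * lam (σ i) ^ k * lam (σ j) ^ k *
          ∏ l : Fin N, P l (σ l))
      - (A ^ k) i i * (A ^ k) j j = -((A ^ k) i j) ^ 2 := by
  have horth' : Pᵀ * P = 1 := mul_eq_one_comm.mp horth
  -- spectral decomposition of powers
  have hpow : ∀ n : ℕ, A ^ n = P * Matrix.diagonal (fun m => lam m ^ n) * Pᵀ := by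
    intro n
    induction n with
    | zero => simp [horth]
    | succ n ih =>
      have hd : Matrix.diagonal (fun m => lam m ^ n) * Matrix.diagonal lam
          = Matrix.diagonal (fun m => lam m ^ (n + 1)) := by
        rw [Matrix.diagonal_mul_diagonal]
        exact congrArg Matrix.diagonal (funext fun m => (pow_succ (lam m) n).symm)
      rw [pow_succ, ih, hdecomp, ← hd]
      simp only [Matrix.mul_assoc]
      rw [← Matrix.mul_assoc Pᵀ P, horth', Matrix.one_mul]
  have hentry : ∀ a b, (A ^ k) a b = ∑ m, P a m * lam m ^ k * P b m := by
    intro a b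
    rw [hpow k, Matrix.mul_apply]
    simp [Matrix.mul_diagonal, Matrix.transpose_apply]
  set M : Matrix (Fin N) (Fin N) ℝ :=
    fun l m => (if l = i then lam m ^ k else 1) * (if l = j then lam m ^ k else 1) * P l m
    with hM
  set B : Matrix (Fin N) (Fin N) ℝ :=
    fun l a => if l = i ∨ l = j then (A ^ k) l a else (1 : Matrix (Fin N) (Fin N) ℝ) l a
    with hB
  -- step 1: the permutation sum is det Mᵀ = det M
  have h1 : (∑ σ : Equiv.Perm (Fin N),
        ((Equiv.Perm.sign σ : ℤ) : ℝ) * lam (σ i) ^ k * lam (σ j) ^ k *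
          ∏ l : Fin N, P l (σ l)) = M.det := by
    rw [← Matrix.det_transpose, Matrix.det_apply']
    apply Finset.sum_congr rfl
    intro σ _
    simp only [Matrix.transpose_apply, hM, Matrix.transpose, Matrix.of_apply]
    rw [Finset.prod_mul_distrib, Finset.prod_mul_distrib]
    rw [Finset.prod_ite_eq' Finset.univ i (fun l => lam (σ l) ^ k),
        Finset.prod_ite_eq' Finset.univ j (fun l => lam (σ l) ^ k)]
    simp only [Finset.mem_univ, if_true]
    ring
  -- step 2: M * Pᵀ = B
  have h2 : M * Pᵀ = B := by
    ext l a
    rw [Matrix.mul_apply]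
    by_cases hli : l = i
    · have hlj : l ≠ j := by rw [hli]; exact hij
      simp only [hM, hB, Matrix.transpose_apply, if_pos hli, if_neg hlj,
        if_pos (Or.inl hli : l = i ∨ l = j), mul_one]
      rw [hentry l a]
      exact Finset.sum_congr rfl fun m _ => by ring
    · by_cases hlj : l = j
      · simp only [hM, hB, Matrix.transpose_apply, if_neg hli, if_pos hlj,
          if_pos (Or.inr hlj : l = i ∨ l = j), one_mul]
        rw [hentry l a]
        exact Finset.sum_congr rfl fun m _ => by ring
      · have hno : ¬(l = i ∨ l = j) := by tauto
        simp only [hM, hB, if_neg hli, if_neg hlj, if_neg hno, Matrix.transpose_apply,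
          one_mul]
        have := congrFun (congrFun horth l) a
        rw [Matrix.mul_apply] at this
        simpa [Matrix.transpose_apply] using this
  -- step 3: det M = det B
  have h3 : M.det = B.det := by
    rw [← h2, Matrix.det_mul, Matrix.det_transpose, hdet, mul_one]
  -- step 4: compute det B
  have hBii : B i i = (A ^ k) i i := by simp [hB]
  have hBjj : B j j = (A ^ k) j j := by simp [hB]
  have hBij : B i j = (A ^ k) i j := by simp [hB]
  have hBji : B j i = (A ^ k) j i := by simp [hB]
  have h4 : B.det = (A ^ k) i i * (A ^ k) j j - (A ^ k) i j * (A ^ k) j i := by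
    rw [← Matrix.det_transpose, Matrix.det_apply']
    have hone : (1 : Equiv.Perm (Fin N)) ≠ Equiv.swap i j := by
      intro h
      exact hij (by simpa using congrArg (fun σ => σ i) h)
    have hzero : ∀ σ ∈ (Finset.univ : Finset (Equiv.Perm (Fin N))),
        σ ∉ ({1, Equiv.swap i j} : Finset (Equiv.Perm (Fin N))) →
        Equiv.Perm.sign σ * ∏ l, Bᵀ (σ l) l = 0 := by
      intro σ _ hσ
      simp only [Finset.mem_insert, Finset.mem_singleton, not_or] at hσ
      have : ¬ ∀ l, l ≠ i → l ≠ j → σ l = l := by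
        intro h
        rcases perm_eq_one_or_swap hij σ h with h | h
        · exact hσ.1 h
        · exact hσ.2 h
      push_neg at this
      obtain ⟨l, hli, hlj, hne⟩ := this
      have : Bᵀ (σ l) l = 0 := by
        have hno : ¬(l = i ∨ l = j) := by tauto
        simp only [Matrix.transpose_apply, hB, Matrix.transpose, Matrix.of_apply, if_neg hno]
        exact Matrix.one_apply_ne hne.symm
      have hz : (∏ l : Fin N, Bᵀ (σ l) l) = 0 :=
        Finset.prod_eq_zero (f := fun l => Bᵀ (σ l) l) (Finset.mem_univ l) this
      rw [hz, mul_zero]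
    rw [← Finset.sum_subset (Finset.subset_univ ({1, Equiv.swap i j} :
            Finset (Equiv.Perm (Fin N)))) hzero,
        Finset.sum_pair hone]
    have hp1 : (∏ l, Bᵀ ((1 : Equiv.Perm (Fin N)) l) l) = B i i * B j j := by
      simp only [Equiv.Perm.coe_one, id_eq, Matrix.transpose_apply]
      rw [← Finset.prod_subset (Finset.subset_univ ({i, j} : Finset (Fin N)))
        (by
          intro l _ hl
          simp only [Finset.mem_insert, Finset.mem_singleton, not_or] at hl
          have hno : ¬(l = i ∨ l = j) := by tauto
          simp [hB, if_neg hno, Matrix.one_apply_eq]),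
        Finset.prod_pair hij]
    have hp2 : (∏ l, Bᵀ (Equiv.swap i j l) l) = B i j * B j i := by
      simp only [Matrix.transpose_apply]
      rw [← Finset.prod_subset (Finset.subset_univ ({i, j} : Finset (Fin N)))
        (by
          intro l _ hl
          simp only [Finset.mem_insert, Finset.mem_singleton, not_or] at hl
          have hno : ¬(l = i ∨ l = j) := by tauto
          rw [Equiv.swap_apply_of_ne_of_ne hl.1 hl.2]
          simp [hB, if_neg hno, Matrix.one_apply_eq]),
        Finset.prod_pair hij, Equiv.swap_apply_left, Equiv.swap_apply_right]
    rw [hp1, hp2, Equiv.Perm.sign_one, Equiv.Perm.sign_swap hij]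
    push_cast
    rw [hBii, hBjj, hBij, hBji]
    ring
  have hsym : (A ^ k) j i = (A ^ k) i j := (hsymm.pow k).apply i j
  rw [h1, h3, h4, hsym]
  ring
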